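/- arXiv:2509.22587 — 2 statements merged into one kernel-verified Lean document; each statement's English description precedes it below -/
import Mathlib

section
/- (Main theorem, local form) Let a < b, k ≥ 0. Suppose u ∈ 𝒫_k([a,b]), û_a ∈ ℝ, and F : [a,b] → ℝ is integrable, and that the DG relation holds: −∫_a^b u(t)v'(t) dt + u(b)v(b) − û_a·v(a) = ∫_a^b F(t)v(t) dt for all v ∈ 𝒫_k. Let 𝓡 ∈ 𝒫_{k+1} satisfy 𝓡(b)=0, 𝓡(a)=1, ∫_a^b 𝓡 w dt = 0 for all w ∈ 𝒫_{k−1}, and define u*(t) := u(t) + (û_a − u(a))𝓡(t). Then ∫_a^b v(t)·(u*)'(t) dt = ∫_a^b F(t)v(t) dt for all v ∈ 𝒫_k, and u*(a) = û_a. -/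
open Polynomial MeasureTheory

lemma poly_int_deriv (p : Polynomial ℝ) (a b : ℝ) :
    ∫ t in a..b, (Polynomial.derivative p).eval t = p.eval b - p.eval a := by
  apply intervalIntegral.integral_deriv_eq_sub' (fun t => p.eval t)
  · funext x; exact Polynomial.deriv p
  · intro x _; exact (p.hasDerivAt x).differentiableAt
  · exact (Polynomial.continuous _).continuousOn

lemma poly_ibp (p q : Polynomial ℝ) (a b : ℝ) :
    (∫ t in a..b, (Polynomial.derivative p).eval t * q.eval t)
      + ∫ t in a..b, p.eval t * (Polynomial.derivative q).eval t
    = p.eval b * q.eval b - p.eval a * q.eval a := by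
  have h := poly_int_deriv (p * q) a b
  rw [Polynomial.derivative_mul] at h
  simp only [Polynomial.eval_add, Polynomial.eval_mul] at h
  rw [intervalIntegral.integral_add
      ((show Continuous (fun t => (Polynomial.derivative p).eval t * q.eval t) from
        (Polynomial.derivative p).continuous.mul q.continuous).intervalIntegrable a b)
      ((show Continuous (fun t => p.eval t * (Polynomial.derivative q).eval t) from
        p.continuous.mul (Polynomial.derivative q).continuous).intervalIntegrable a b)] at h
  exact h

/-- Main theorem, local form: If `u ∈ 𝒫_k` satisfies the DG weak relation
with numerical trace `uhat_a` and right-hand side `F`, and `𝓡 ∈ 𝒫_{k+1}` is the scaled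
left-Radau polynomial (`𝓡(b)=0`, `𝓡(a)=1`, orthogonal to `𝒫_{k-1}`), then the
post-processed `u* := u + (uhat_a - u(a))𝓡` satisfies the CG-type weak relation with the same
right-hand side, and `u*(a) = uhat_a`. -/
theorem dg_postprocessed_is_cg (k : ℕ) (a b : ℝ) (hab : a < b)
    (u : Polynomial ℝ) (hu : u.degree ≤ (k : ℕ)) (uhat_a : ℝ)
    (F : ℝ → ℝ) (hF : IntervalIntegrable F volume a b)
    (hDG : ∀ v : Polynomial ℝ, v.degree ≤ (k : ℕ) →
      -(∫ t in a..b, u.eval t * (Polynomial.derivative v).eval t)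
          + u.eval b * v.eval b - uhat_a * v.eval a
        = ∫ t in a..b, F t * v.eval t)
    (𝓡 : Polynomial ℝ) (h𝓡deg : 𝓡.degree ≤ ((k + 1 : ℕ) : WithBot ℕ))
    (h𝓡b : 𝓡.eval b = 0) (h𝓡a : 𝓡.eval a = 1)
    (h𝓡orth : ∀ w : Polynomial ℝ, w.degree < (k : ℕ) →
      ∫ t in a..b, 𝓡.eval t * w.eval t = 0) :
    (∀ v : Polynomial ℝ, v.degree ≤ (k : ℕ) →
      ∫ t in a..b,
          v.eval t * (Polynomial.derivative (u + Polynomial.C (uhat_a - u.eval a) * 𝓡)).eval t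
        = ∫ t in a..b, F t * v.eval t) ∧
    (u + Polynomial.C (uhat_a - u.eval a) * 𝓡).eval a = uhat_a := by
  set c : ℝ := uhat_a - u.eval a with hc
  constructor
  · intro v hv
    -- orthogonality : ∫ 𝓡 v' = 0
    have horth : ∫ t in a..b, 𝓡.eval t * (Polynomial.derivative v).eval t = 0 := by
      by_cases hv0 : v = 0
      · simp [hv0]
      · exact h𝓡orth _ (lt_of_lt_of_le (Polynomial.degree_derivative_lt hv0) hv)
    -- ∫ v u'
    have hvu : ∫ t in a..b, v.eval t * (Polynomial.derivative u).eval t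
        = -(∫ t in a..b, u.eval t * (Polynomial.derivative v).eval t)
          + u.eval b * v.eval b - u.eval a * v.eval a := by
      have h := poly_ibp u v a b
      have comm : (∫ t in a..b, v.eval t * (Polynomial.derivative u).eval t)
          = ∫ t in a..b, (Polynomial.derivative u).eval t * v.eval t :=
        intervalIntegral.integral_congr (fun t _ => mul_comm _ _)
      rw [comm]; linarith
    -- ∫ v 𝓡'
    have hvR : ∫ t in a..b, v.eval t * (Polynomial.derivative 𝓡).eval t = -v.eval a := by
      have h := poly_ibp 𝓡 v a b
      rw [horth, h𝓡a, h𝓡b] at h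
      have comm : (∫ t in a..b, v.eval t * (Polynomial.derivative 𝓡).eval t)
          = ∫ t in a..b, (Polynomial.derivative 𝓡).eval t * v.eval t :=
        intervalIntegral.integral_congr (fun t _ => mul_comm _ _)
      rw [comm]; linarith
    have expand : ∀ t : ℝ, v.eval t *
          (Polynomial.derivative (u + Polynomial.C c * 𝓡)).eval t
        = v.eval t * (Polynomial.derivative u).eval t
          + c * (v.eval t * (Polynomial.derivative 𝓡).eval t) := by
      intro t
      simp [Polynomial.derivative_add, Polynomial.derivative_mul]
      ring
    simp_rw [expand]
    rw [intervalIntegral.integral_add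
        ((show Continuous (fun t => v.eval t * (Polynomial.derivative u).eval t) from
          v.continuous.mul (Polynomial.derivative u).continuous).intervalIntegrable a b)
        ((show Continuous (fun t => c * (v.eval t * (Polynomial.derivative 𝓡).eval t)) from
          (continuous_const.mul
          (v.continuous.mul (Polynomial.derivative 𝓡).continuous))).intervalIntegrable a b),
      intervalIntegral.integral_const_mul, hvu, hvR]
    linear_combination hDG v hv
  · simp only [Polynomial.eval_add, Polynomial.eval_mul, Polynomial.eval_C, h𝓡a, hc]
    ring
end

section
/- (Uniqueness of DG solution on one interval for linear F) Let a < b, k ≥ 0, û_a ∈ ℝ, and F : [a,b] → ℝ integrable. There exists a unique u ∈ 𝒫_k([a,b]) satisfying −∫_a^b u(t)v'(t) dt + u(b)v(b) − û_a v(a) = ∫_a^b F(t)v(t) dt for all v ∈ 𝒫_k([a,b]). -/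
open Polynomial MeasureTheory

namespace DGaux

variable (a b : ℝ)

lemma polyIntble (p : ℝ[X]) : IntervalIntegrable (fun t => p.eval t) volume a b :=
  (p.continuous_aeval).intervalIntegrable a b

lemma ftc (p : ℝ[X]) :
    (∫ t in a..b, (derivative p).eval t) = p.eval b - p.eval a := by
  apply intervalIntegral.integral_eq_sub_of_hasDerivAt
  · exact fun x _ => p.hasDerivAt x
  · exact polyIntble a b _

/-- integral of eval as a linear map -/
noncomputable def J : ℝ[X] →ₗ[ℝ] ℝ where
  toFun p := ∫ t in a..b, p.eval t
  map_add' p q := by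
    simp only [eval_add]
    exact intervalIntegral.integral_add (polyIntble a b p) (polyIntble a b q)
  map_smul' c p := by
    simp only [eval_smul, smul_eq_mul, RingHom.id_apply]
    exact intervalIntegral.integral_const_mul c _

/-- the DG bilinear form -/
noncomputable def B : ℝ[X] →ₗ[ℝ] ℝ[X] →ₗ[ℝ] ℝ :=
  LinearMap.mk₂ ℝ (fun u v => -(J a b (u * derivative v)) + u.eval b * v.eval b)
    (fun u u' v => by simp [add_mul, mul_add]; ring)
    (fun c u v => by simp [smul_mul_assoc]; ring)
    (fun u v v' => by simp [mul_add]; ring)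
    (fun c u v => by simp [mul_smul_comm]; ring)

lemma sq_integral_zero (hab : a < b) (p : ℝ[X])
    (h : (∫ t in a..b, p.eval t * p.eval t) = 0) : p = 0 := by
  have hi : IntervalIntegrable (fun t => p.eval t * p.eval t) volume a b := by
    exact ((p.continuous_aeval).mul (p.continuous_aeval)).intervalIntegrable a b
  have hnn : 0 ≤ᵐ[volume.restrict (Set.Ioc a b)] fun t => p.eval t * p.eval t :=
    Filter.Eventually.of_forall fun t => mul_self_nonneg _
  have h0 : (fun t => p.eval t * p.eval t) =ᵐ[volume.restrict (Set.Ioc a b)] 0 :=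
    (intervalIntegral.integral_eq_zero_iff_of_le_of_nonneg_ae hab.le hnn hi).mp h
  by_contra hp
  have hroots : {t | p.eval t * p.eval t = 0}.Finite := by
    refine (Polynomial.finite_setOf_isRoot hp).subset ?_
    intro t ht
    simp only [Set.mem_setOf_eq, mul_self_eq_zero] at ht
    exact ht
  have hne : volume (Set.Ioc a b) ≠ 0 := by
    simp [Real.volume_Ioc, sub_pos.mpr hab, hab]
  have hz : volume ({t | p.eval t * p.eval t ≠ 0} ∩ Set.Ioc a b) = 0 := by
    have h0' := h0
    rw [Filter.EventuallyEq, ae_iff] at h0'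
    rw [Measure.restrict_apply₀' (by measurability)] at h0'
    simpa using h0'
  have hcover : Set.Ioc a b ⊆ {t | p.eval t * p.eval t = 0} ∪
      ({t | p.eval t * p.eval t ≠ 0} ∩ Set.Ioc a b) := by
    intro t ht
    by_cases hc : p.eval t * p.eval t = 0
    · exact Or.inl hc
    · exact Or.inr ⟨hc, ht⟩
  have hfin : volume (Set.Ioc a b) = 0 := by
    refine le_antisymm ((measure_mono hcover).trans ?_) zero_le
    refine (measure_union_le _ _).trans ?_
    rw [hroots.measure_zero volume, hz]
    simp
  exact hne hfin

/-- Key injectivity lemma -/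
lemma key (k : ℕ) (hab : a < b) (u : ℝ[X]) (hu : u.degree ≤ (k : ℕ))
    (h : ∀ v : ℝ[X], v.degree ≤ (k : ℕ) →
      -(∫ t in a..b, u.eval t * (derivative v).eval t) + u.eval b * v.eval b = 0) :
    u = 0 := by
  -- IBP skeleton: for any p q, ∫ p q' + ∫ p' q = p(b)q(b) - p(a)q(a)
  have ibp : ∀ p q : ℝ[X],
      (∫ t in a..b, p.eval t * (derivative q).eval t)
        + (∫ t in a..b, (derivative p).eval t * q.eval t)
      = p.eval b * q.eval b - p.eval a * q.eval a := by
    intro p q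
    have h1 := ftc a b (p * q)
    rw [derivative_mul] at h1
    have h2 : (∫ t in a..b, (derivative p * q + p * derivative q).eval t)
        = (∫ t in a..b, (derivative p).eval t * q.eval t)
          + (∫ t in a..b, p.eval t * (derivative q).eval t) := by
      simp only [eval_add, eval_mul]
      exact intervalIntegral.integral_add
        (((derivative p).continuous_aeval.mul q.continuous_aeval).intervalIntegrable a b)
        ((p.continuous_aeval.mul (derivative q).continuous_aeval).intervalIntegrable a b)
    rw [h2] at h1
    simp only [eval_mul] at h1
    linarith
  -- step 1: boundary values vanish
  have huu := h u hu
  have hself := ibp u u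
  have hcomm : (∫ t in a..b, (derivative u).eval t * u.eval t)
      = ∫ t in a..b, u.eval t * (derivative u).eval t := by
    simp_rw [mul_comm]
  rw [hcomm] at hself
  have hb2 : u.eval b * u.eval b + u.eval a * u.eval a = 0 := by linarith
  have hbz : u.eval b = 0 := by nlinarith [mul_self_nonneg (u.eval a), mul_self_nonneg (u.eval b)]
  have haz : u.eval a = 0 := by nlinarith [mul_self_nonneg (u.eval a), mul_self_nonneg (u.eval b)]
  -- step 2: ∫ u' v = 0 for all v of degree ≤ k
  have hint : ∀ v : ℝ[X], v.degree ≤ (k : ℕ) →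
      (∫ t in a..b, (derivative u).eval t * v.eval t) = 0 := by
    intro v hv
    have h1 := h v hv
    rw [hbz] at h1
    simp only [zero_mul, add_zero, neg_eq_zero] at h1
    have h2 := ibp u v
    rw [hbz, haz, h1] at h2
    simp only [zero_mul, zero_add] at h2
    linarith
  -- step 3: v = derivative u
  have hdu : (∫ t in a..b, (derivative u).eval t * (derivative u).eval t) = 0 :=
    hint (derivative u) (le_trans degree_derivative_le hu)
  have hduz : derivative u = 0 := sq_integral_zero a b hab _ hdu
  have hnd : u.natDegree = 0 := natDegree_eq_zero_of_derivative_eq_zero hduz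
  have hC := Polynomial.eq_C_of_natDegree_eq_zero hnd
  rw [hC] at haz
  simp only [eval_C] at haz
  rw [hC, haz, map_zero]

end DGaux


/-- Uniqueness of the DG solution on one interval for linear `F`: Given
`a < b`, `k ≥ 0`, `uhat_a : ℝ`, and an integrable `F`, there exists a unique polynomial
`u` of degree at most `k` satisfying the DG weak relation
`-∫_a^b u v' + u(b)v(b) - uhat_a·v(a) = ∫_a^b F v` for all `v ∈ 𝒫_k`. -/
theorem dg_exists_unique (k : ℕ) (a b : ℝ) (hab : a < b) (uhat_a : ℝ)
    (F : ℝ → ℝ) (hF : IntervalIntegrable F volume a b) :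
    ∃! u : Polynomial ℝ, u.degree ≤ (k : ℕ) ∧
      ∀ v : Polynomial ℝ, v.degree ≤ (k : ℕ) →
        -(∫ t in a..b, u.eval t * (Polynomial.derivative v).eval t)
            + u.eval b * v.eval b - uhat_a * v.eval a
          = ∫ t in a..b, F t * v.eval t := by
  classical
  set V : Submodule ℝ (Polynomial ℝ) := degreeLE ℝ (k : ℕ) with hV
  haveI hfd : FiniteDimensional ℝ V := by
    rw [hV, ← degreeLT_succ_eq_degreeLE]
    exact Module.Finite.equiv (degreeLTEquiv ℝ (k + 1)).symm
  -- the DG bilinear form restricted to V, as a map into the dual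
  set T : V →ₗ[ℝ] Module.Dual ℝ V := ((DGaux.B a b).domRestrict V).compl₂ V.subtype with hT
  have hTapp : ∀ (u v : V), T u v
      = -(∫ t in a..b, (u : ℝ[X]).eval t * (derivative (v : ℝ[X])).eval t)
        + (u : ℝ[X]).eval b * (v : ℝ[X]).eval b := by
    intro u v
    have : T u v = DGaux.B a b (u : ℝ[X]) (v : ℝ[X]) := rfl
    rw [this]
    simp only [DGaux.B, LinearMap.mk₂_apply, DGaux.J, LinearMap.coe_mk, AddHom.coe_mk]
    congr 1
    congr 1
    congr 1
    funext t
    simp [eval_mul]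
  -- T is injective
  have hinj : Function.Injective T := by
    rw [← LinearMap.ker_eq_bot]
    rw [Submodule.eq_bot_iff]
    intro u hu
    rw [LinearMap.mem_ker] at hu
    have h0 : (u : ℝ[X]) = 0 := by
      apply DGaux.key a b k hab _ (mem_degreeLE.mp u.2)
      intro v hv
      have hz : T u ⟨v, mem_degreeLE.mpr hv⟩ = 0 := by rw [hu]; rfl
      rw [hTapp] at hz
      exact hz
    exact Subtype.ext h0
  have hsurj : Function.Surjective T :=
    (LinearMap.injective_iff_surjective_of_finrank_eq_finrank
      (Subspace.dual_finrank_eq (V := V)).symm).mp hinj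
  -- the right-hand side functional
  have hFv : ∀ v : ℝ[X], IntervalIntegrable (fun t => F t * v.eval t) volume a b :=
    fun v => hF.mul_continuousOn (v.continuous_aeval).continuousOn
  set Gfull : ℝ[X] →ₗ[ℝ] ℝ :=
    { toFun := fun v => (∫ t in a..b, F t * v.eval t) + uhat_a * v.eval a
      map_add' := by
        intro v w
        have : (∫ t in a..b, F t * (v + w).eval t)
            = (∫ t in a..b, F t * v.eval t) + ∫ t in a..b, F t * w.eval t := by
          simp only [eval_add, mul_add]
          exact intervalIntegral.integral_add (hFv v) (hFv w)
        rw [this]; simp only [eval_add]; ring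
      map_smul' := by
        intro c v
        have : (∫ t in a..b, F t * (c • v).eval t)
            = c * ∫ t in a..b, F t * v.eval t := by
          simp only [eval_smul, smul_eq_mul, mul_left_comm]
          exact intervalIntegral.integral_const_mul c _
        rw [this]; simp only [eval_smul, smul_eq_mul, RingHom.id_apply]; ring } with hG
  obtain ⟨u, hTu⟩ := hsurj (Gfull.domRestrict V)
  refine ⟨(u : ℝ[X]), ⟨mem_degreeLE.mp u.2, ?_⟩, ?_⟩
  · intro v hv
    have := congrArg (fun φ : Module.Dual ℝ V => φ ⟨v, mem_degreeLE.mpr hv⟩) hTu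
    rw [hTapp] at this
    have hGv : Gfull.domRestrict V ⟨v, mem_degreeLE.mpr hv⟩
        = (∫ t in a..b, F t * v.eval t) + uhat_a * v.eval a := rfl
    rw [hGv] at this
    linarith
  · -- uniqueness
    intro y ⟨hy, hrel⟩
    have hw : y - (u : ℝ[X]) = 0 := by
      apply DGaux.key a b k hab _ (le_trans (degree_sub_le _ _)
        (max_le hy (mem_degreeLE.mp u.2)))
      intro v hv
      have h1 := hrel v hv
      have h2 : -(∫ t in a..b, (u : ℝ[X]).eval t * (derivative v).eval t)
          + (u : ℝ[X]).eval b * v.eval b - uhat_a * v.eval a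
          = ∫ t in a..b, F t * v.eval t := by
        have := congrArg (fun φ : Module.Dual ℝ V => φ ⟨v, mem_degreeLE.mpr hv⟩) hTu
        rw [hTapp] at this
        have hGv : Gfull.domRestrict V ⟨v, mem_degreeLE.mpr hv⟩
            = (∫ t in a..b, F t * v.eval t) + uhat_a * v.eval a := rfl
        rw [hGv] at this
        linarith
      have hsub : (∫ t in a..b, (y - (u : ℝ[X])).eval t * (derivative v).eval t)
          = (∫ t in a..b, y.eval t * (derivative v).eval t)
            - ∫ t in a..b, (u : ℝ[X]).eval t * (derivative v).eval t := by
        simp only [eval_sub, sub_mul]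
        exact intervalIntegral.integral_sub
          ((y.continuous_aeval.mul (derivative v).continuous_aeval).intervalIntegrable a b)
          (((u : ℝ[X]).continuous_aeval.mul (derivative v).continuous_aeval).intervalIntegrable a b)
      rw [hsub]
      simp only [eval_sub, sub_mul]
      linarith
    have := sub_eq_zero.mp hw
    exact this
end
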